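/- For a (GF(2))^t-valued family of messages on an ICC digraph, every vertex can decode its own message from the ICC code together with its side information; i.e., the ICC code is a valid index code for the ICC digraph. -/
import Mathlib


/-- An ICC digraph with `k` Type-I paths. `n1 i ≥ 1` is the number of vertices of
Type-I path `P_i`; `n2 i j` is the number of vertices of Type-II path `P_{i,j}`
(`0` if empty, and `n2 i i = 0`); `q i j` (1-based, `1 ≤ q i j ≤ n1 j`) is the
index of the vertex of `P_j` that the arc leaving `P_{i,j}` (or, if `P_{i,j}` is
empty, the arc leaving the terminal vertex of `P_i`) points to. -/
structure ICCDigraph (k : ℕ) where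
  n1 : Fin k → ℕ
  hn1 : ∀ i, 1 ≤ n1 i
  n2 : Fin k → Fin k → ℕ
  hdiag : ∀ i, n2 i i = 0
  q : Fin k → Fin k → ℕ
  hq1 : ∀ i j, 1 ≤ q i j
  hq2 : ∀ i j, q i j ≤ n1 j

namespace ICCDigraph

variable {k : ℕ} (D : ICCDigraph k)

/-- The vertex set: vertices `v_{a+1}^i = ⟨i, a⟩` of Type-I paths (0-based `a`),
and vertices `v_{b+1}^{ij} = ⟨(i,j), b⟩` of Type-II paths. -/
abbrev Vtx : Type :=
  (Σ i : Fin k, Fin (D.n1 i)) ⊕ (Σ p : Fin k × Fin k, Fin (D.n2 p.1 p.2))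

/-- The terminal vertex `v_{n_i}^i` of Type-I path `P_i`. -/
def terminal (i : Fin k) : D.Vtx :=
  Sum.inl ⟨i, ⟨D.n1 i - 1, by have := D.hn1 i; omega⟩⟩

/-- The arc relation of the ICC digraph: arcs along Type-I and Type-II paths,
and the interconnecting arcs. -/
def Arc : D.Vtx → D.Vtx → Prop
  | Sum.inl ⟨i, a⟩, Sum.inl ⟨j, a'⟩ =>
      (i = j ∧ (a' : ℕ) = (a : ℕ) + 1) ∨
      (i ≠ j ∧ (a : ℕ) = D.n1 i - 1 ∧ D.n2 i j = 0 ∧ (a' : ℕ) = D.q i j - 1)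
  | Sum.inl ⟨i, a⟩, Sum.inr ⟨p, b⟩ =>
      i = p.1 ∧ (a : ℕ) = D.n1 i - 1 ∧ (b : ℕ) = 0
  | Sum.inr ⟨p, b⟩, Sum.inr ⟨p', b'⟩ =>
      p = p' ∧ (b' : ℕ) = (b : ℕ) + 1
  | Sum.inr ⟨p, b⟩, Sum.inl ⟨j, a⟩ =>
      p.2 = j ∧ (b : ℕ) = D.n2 p.1 p.2 - 1 ∧ (a : ℕ) = D.q p.1 p.2 - 1

/-- A closed directed walk (cycle) starting and ending at `v`, visiting the
vertices `v :: l`. -/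
def IsClosedWalk (v : D.Vtx) (l : List D.Vtx) : Prop :=
  List.Chain D.Arc v (l ++ [v])

/-- `S` induces an acyclic subdigraph: no directed cycle lies within `S`. -/
def AcyclicOn (S : Finset D.Vtx) : Prop :=
  ¬ ∃ (v : D.Vtx) (l : List D.Vtx), v ∈ S ∧ (∀ u ∈ l, u ∈ S) ∧ D.IsClosedWalk v l

open Classical in
/-- `MAIS(D)`: the maximum order of an acyclic induced subdigraph. -/
noncomputable def mais : ℕ :=
  (Finset.univ.filter fun S : Finset D.Vtx => D.AcyclicOn S).sup Finset.card

/-- The message (1-based index `a`) of the `a`-th vertex of Type-I path `P_i`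
(`0` if out of range). -/
def msgI {t : ℕ} (x : D.Vtx → Fin t → ZMod 2) (i : Fin k) (a : ℕ) :
    Fin t → ZMod 2 :=
  if h : 1 ≤ a ∧ a ≤ D.n1 i then x (Sum.inl ⟨i, ⟨a - 1, by omega⟩⟩) else 0

/-- The message (1-based index `b`) of the `b`-th vertex of Type-II path
`P_{i,j}` (`0` if out of range). -/
def msgII {t : ℕ} (x : D.Vtx → Fin t → ZMod 2) (i j : Fin k) (b : ℕ) :
    Fin t → ZMod 2 :=
  if h : 1 ≤ b ∧ b ≤ D.n2 i j then x (Sum.inr ⟨(i, j), ⟨b - 1, by show b - 1 < D.n2 i j; omega⟩⟩) else 0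

/-- Index set of the ICC code's codewords: the `n_i - 1` codewords along each
Type-I path, the `n_{ij} - 1` codewords along each Type-II path, one codeword per
nonempty Type-II path, and the single codeword `⊕ᵢ x_{n_i}^i`. -/
abbrev CodeIdx : Type :=
  (Σ i : Fin k, Fin (D.n1 i - 1)) ⊕
    ((Σ p : Fin k × Fin k, Fin (D.n2 p.1 p.2 - 1)) ⊕
      (({p : Fin k × Fin k // 1 ≤ D.n2 p.1 p.2}) ⊕ Unit))

/-- The ICC code: `w_a^i = x_a^i ⊕ x_{a+1}^i`, `w_b^{ij} = x_b^{ij} ⊕ x_{b+1}^{ij}`,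
`w_{n_{ij}}^{ij} = x_{n_{ij}}^{ij} ⊕ x_{q_i}^j`, and `w' = ⊕ᵢ x_{n_i}^i`. -/
def code {t : ℕ} (x : D.Vtx → Fin t → ZMod 2) : D.CodeIdx → Fin t → ZMod 2
  | Sum.inl ⟨i, a⟩ => D.msgI x i ((a : ℕ) + 1) + D.msgI x i ((a : ℕ) + 2)
  | Sum.inr (Sum.inl ⟨p, b⟩) =>
      D.msgII x p.1 p.2 ((b : ℕ) + 1) + D.msgII x p.1 p.2 ((b : ℕ) + 2)
  | Sum.inr (Sum.inr (Sum.inl ⟨p, _⟩)) =>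
      D.msgII x p.1 p.2 (D.n2 p.1 p.2) + D.msgI x p.2 (D.q p.1 p.2)
  | Sum.inr (Sum.inr (Sum.inr _)) => ∑ i : Fin k, D.msgI x i (D.n1 i)

end ICCDigraph

section Helpers

variable {k t : ℕ} (D : ICCDigraph k)

private lemma zmod2_add_self (f : Fin t → ZMod 2) : f + f = 0 := by
  funext u
  have h : ∀ z : ZMod 2, z + z = 0 := by decide
  exact h (f u)

private lemma tele (f : ℕ → Fin t → ZMod 2) {s e : ℕ} (h : s ≤ e) :
    ∑ a ∈ Finset.Ico s e, (f a + f (a + 1)) = f s + f e := by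
  induction e, h using Nat.le_induction with
  | base => rw [Finset.Ico_self, Finset.sum_empty, zmod2_add_self]
  | succ e he ih =>
      rw [Finset.sum_Ico_succ_top he, ih, add_assoc, ← add_assoc (f e),
        zmod2_add_self, zero_add]

private lemma canc2 (a b : Fin t → ZMod 2) : a + (a + b) = b := by
  rw [← add_assoc, zmod2_add_self, zero_add]

private lemma msgI_eq (x : D.Vtx → Fin t → ZMod 2) (i : Fin k) (av : Fin (D.n1 i)) :
    D.msgI x i ((av : ℕ) + 1) = x (Sum.inl ⟨i, av⟩) := by
  have hav := av.2
  rw [ICCDigraph.msgI, dif_pos ⟨by omega, by omega⟩]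
  simp

private lemma msgII_eq (x : D.Vtx → Fin t → ZMod 2) (i j : Fin k)
    (bv : Fin (D.n2 i j)) :
    D.msgII x i j ((bv : ℕ) + 1) = x (Sum.inr ⟨(i, j), bv⟩) := by
  have hbv := bv.2
  rw [ICCDigraph.msgII, dif_pos ⟨by omega, by omega⟩]
  simp

/-- Codeword along Type-I path `P_j`, index `a` (0-based), as a total function. -/
private def cI (c : D.CodeIdx → Fin t → ZMod 2) (j : Fin k) (a : ℕ) :
    Fin t → ZMod 2 :=
  if h : a < D.n1 j - 1 then c (Sum.inl ⟨j, ⟨a, h⟩⟩) else 0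

/-- Codeword along Type-II path `P_{i,j}`, index `b` (0-based), as a total function. -/
private def cII (c : D.CodeIdx → Fin t → ZMod 2) (i j : Fin k) (b : ℕ) :
    Fin t → ZMod 2 :=
  if h : b < D.n2 i j - 1 then c (Sum.inr (Sum.inl ⟨(i, j), ⟨b, h⟩⟩)) else 0

/-- The connecting codeword leaving `P_{i,j}`, as a total function. -/
private def cC (c : D.CodeIdx → Fin t → ZMod 2) (i j : Fin k) :
    Fin t → ZMod 2 :=
  if h : 1 ≤ D.n2 i j then c (Sum.inr (Sum.inr (Sum.inl ⟨(i, j), h⟩))) else 0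

private lemma cI_code (x : D.Vtx → Fin t → ZMod 2) {j : Fin k} {a : ℕ}
    (h : a < D.n1 j - 1) :
    cI D (D.code x) j a = D.msgI x j (a + 1) + D.msgI x j (a + 1 + 1) := by
  rw [cI, dif_pos h]; rfl

private lemma cII_code (x : D.Vtx → Fin t → ZMod 2) {i j : Fin k} {b : ℕ}
    (h : b < D.n2 i j - 1) :
    cII D (D.code x) i j b = D.msgII x i j (b + 1) + D.msgII x i j (b + 1 + 1) := by
  rw [cII, dif_pos h]; rfl

private lemma cC_code (x : D.Vtx → Fin t → ZMod 2) {i j : Fin k}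
    (h : 1 ≤ D.n2 i j) :
    cC D (D.code x) i j = D.msgII x i j (D.n2 i j) + D.msgI x j (D.q i j) := by
  rw [cC, dif_pos h]; rfl

/-- Telescoped Type-I codewords: from `msgI q` one recovers `msgI (n1 j)`. -/
private lemma teleI (x : D.Vtx → Fin t → ZMod 2) (i j : Fin k) :
    ∑ a ∈ Finset.Ico (D.q i j - 1) (D.n1 j - 1), cI D (D.code x) j a =
      D.msgI x j (D.q i j) + D.msgI x j (D.n1 j) := by
  have hq1 := D.hq1 i j
  have hq2 := D.hq2 i j
  have hn1 := D.hn1 j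
  have h1 : D.q i j - 1 + 1 = D.q i j := by omega
  have h2 : D.n1 j - 1 + 1 = D.n1 j := by omega
  calc ∑ a ∈ Finset.Ico (D.q i j - 1) (D.n1 j - 1), cI D (D.code x) j a
      = ∑ a ∈ Finset.Ico (D.q i j - 1) (D.n1 j - 1),
          ((fun a' => D.msgI x j (a' + 1)) a + (fun a' => D.msgI x j (a' + 1)) (a + 1)) :=
        Finset.sum_congr rfl fun a ha => cI_code D x (Finset.mem_Ico.mp ha).2
    _ = D.msgI x j (D.q i j - 1 + 1) + D.msgI x j (D.n1 j - 1 + 1) := tele _ (by omega)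
    _ = _ := by rw [h1, h2]

/-- Telescoped Type-II codewords: from `msgII 1` one recovers `msgII (n2 i j)`. -/
private lemma teleII (x : D.Vtx → Fin t → ZMod 2) (i j : Fin k) (hn : 1 ≤ D.n2 i j) :
    ∑ b ∈ Finset.Ico 0 (D.n2 i j - 1), cII D (D.code x) i j b =
      D.msgII x i j 1 + D.msgII x i j (D.n2 i j) := by
  have h2 : D.n2 i j - 1 + 1 = D.n2 i j := by omega
  calc ∑ b ∈ Finset.Ico 0 (D.n2 i j - 1), cII D (D.code x) i j b
      = ∑ b ∈ Finset.Ico 0 (D.n2 i j - 1),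
          ((fun b' => D.msgII x i j (b' + 1)) b + (fun b' => D.msgII x i j (b' + 1)) (b + 1)) :=
        Finset.sum_congr rfl fun b hb => cII_code D x (Finset.mem_Ico.mp hb).2
    _ = D.msgII x i j (0 + 1) + D.msgII x i j (D.n2 i j - 1 + 1) := tele _ (by omega)
    _ = _ := by rw [h2]

/-- The part of the decoder for the terminal vertex of `P_i` that recovers
`x_{n_j}^j` for `j ≠ i` (and outputs `0` for `j = i`). -/
private def Rterm (i : Fin k) (a : Fin (D.n1 i)) (hterm : (a : ℕ) = D.n1 i - 1)
    (c : D.CodeIdx → Fin t → ZMod 2)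
    (s : {u : D.Vtx // D.Arc (Sum.inl ⟨i, a⟩) u} → Fin t → ZMod 2)
    (j : Fin k) : Fin t → ZMod 2 :=
  if h : j = i then 0 else
    (if hz : D.n2 i j = 0 then
        s ⟨Sum.inl ⟨j, ⟨D.q i j - 1, by have := D.hq1 i j; have := D.hq2 i j; omega⟩⟩,
          Or.inr ⟨fun e => h e.symm, hterm, hz, rfl⟩⟩
      else
        s ⟨Sum.inr ⟨(i, j), ⟨0, Nat.pos_of_ne_zero hz⟩⟩, ⟨rfl, hterm, rfl⟩⟩
          + ∑ b ∈ Finset.Ico 0 (D.n2 i j - 1), cII D c i j b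
          + cC D c i j)
      + ∑ a' ∈ Finset.Ico (D.q i j - 1) (D.n1 j - 1), cI D c j a'

private lemma Rterm_eval (i : Fin k) (a : Fin (D.n1 i)) (hterm : (a : ℕ) = D.n1 i - 1)
    (x : D.Vtx → Fin t → ZMod 2) (j : Fin k) :
    Rterm D i a hterm (D.code x) (fun u => x u.1) j =
      if j = i then 0 else D.msgI x j (D.n1 j) := by
  rw [Rterm]
  by_cases h : j = i
  · rw [dif_pos h, if_pos h]
  rw [dif_neg h, if_neg h, teleI]
  have hq1 := D.hq1 i j
  have h1 : D.q i j - 1 + 1 = D.q i j := by omega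
  by_cases hz : D.n2 i j = 0
  · rw [dif_pos hz]
    have hx := msgI_eq D x j ⟨D.q i j - 1, by have := D.hq2 i j; omega⟩
    simp only [h1] at hx
    rw [hx, canc2]
  · rw [dif_neg hz]
    have hn : 1 ≤ D.n2 i j := Nat.one_le_iff_ne_zero.mpr hz
    have hx := msgII_eq D x i j ⟨0, Nat.pos_of_ne_zero hz⟩
    simp only [Nat.zero_add] at hx
    rw [teleII D x i j hn, cC_code D x hn, ← hx, canc2, canc2, canc2]

end Helpers

/-- The ICC code is a valid index code for the ICC digraph: every
vertex `v` can decode its own message from the ICC codewords together with its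
side information (the messages of its out-neighbors). -/
theorem stmt11 {k t : ℕ} (D : ICCDigraph k) (v : D.Vtx) :
    ∃ g : (D.CodeIdx → Fin t → ZMod 2) →
        ({u : D.Vtx // D.Arc v u} → Fin t → ZMod 2) → (Fin t → ZMod 2),
      ∀ x : D.Vtx → Fin t → ZMod 2, g (D.code x) (fun u => x u.1) = x v := by
  classical
  obtain ⟨i, a⟩ | ⟨⟨i, j⟩, b⟩ := v
  · by_cases hterm : (a : ℕ) = D.n1 i - 1
    · -- terminal vertex of `P_i`
      refine ⟨fun c s => c (Sum.inr (Sum.inr (Sum.inr ()))) +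
        ∑ j : Fin k, Rterm D i a hterm c s j, fun x => ?_⟩
      beta_reduce
      have hcode : D.code x (Sum.inr (Sum.inr (Sum.inr ()))) =
          ∑ j : Fin k, D.msgI x j (D.n1 j) := rfl
      rw [hcode, Finset.sum_congr rfl fun j _ => Rterm_eval D i a hterm x j,
        ← Finset.sum_add_distrib]
      have hone : ∀ j : Fin k,
          D.msgI x j (D.n1 j) + (if j = i then 0 else D.msgI x j (D.n1 j)) =
            if j = i then D.msgI x i (D.n1 i) else 0 := by
        intro j
        by_cases h : j = i
        · subst h; rw [if_pos rfl, if_pos rfl, add_zero]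
        · rw [if_neg h, if_neg h, zmod2_add_self]
      rw [Finset.sum_congr rfl fun j _ => hone j, Finset.sum_ite_eq' Finset.univ i
        (fun _ => D.msgI x i (D.n1 i)), if_pos (Finset.mem_univ i)]
      have hx := msgI_eq D x i a
      have ha : (a : ℕ) + 1 = D.n1 i := by have := D.hn1 i; omega
      rw [ha] at hx
      exact hx
    · -- non-terminal vertex of `P_i`
      have ha : (a : ℕ) + 1 < D.n1 i := by have := a.2; have := D.hn1 i; omega
      refine ⟨fun c s => cI D c i a +
        s ⟨Sum.inl ⟨i, ⟨(a : ℕ) + 1, ha⟩⟩, Or.inl ⟨rfl, rfl⟩⟩, fun x => ?_⟩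
      beta_reduce
      rw [cI_code D x (by omega), ← msgI_eq D x i ⟨(a : ℕ) + 1, ha⟩]
      show D.msgI x i ((a : ℕ) + 1) + D.msgI x i ((a : ℕ) + 1 + 1) +
          D.msgI x i ((a : ℕ) + 1 + 1) = _
      rw [add_assoc, zmod2_add_self, add_zero, msgI_eq]
  · have hn : 1 ≤ D.n2 i j := by have hb2 : (b : ℕ) < D.n2 i j := b.2; omega
    by_cases hb : (b : ℕ) = D.n2 i j - 1
    · -- terminal vertex of `P_{i,j}`
      refine ⟨fun c s => cC D c i j +
        s ⟨Sum.inl ⟨j, ⟨D.q i j - 1, by have := D.hq1 i j; have := D.hq2 i j; omega⟩⟩,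
          ⟨rfl, hb, rfl⟩⟩, fun x => ?_⟩
      beta_reduce
      rw [cC_code D x hn]
      have hx := msgI_eq D x j ⟨D.q i j - 1, by have := D.hq2 i j; have := D.hq1 i j; omega⟩
      have h1 : D.q i j - 1 + 1 = D.q i j := by have := D.hq1 i j; omega
      rw [h1] at hx
      rw [← hx, add_assoc, zmod2_add_self, add_zero]
      have hx2 := msgII_eq D x i j b
      have h2 : (b : ℕ) + 1 = D.n2 i j := by omega
      rw [h2] at hx2
      exact hx2
    · -- non-terminal vertex of `P_{i,j}`
      have hblt : (b : ℕ) + 1 < D.n2 i j := by have hb2 : (b : ℕ) < D.n2 i j := b.2; omega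
      refine ⟨fun c s => cII D c i j b +
        s ⟨Sum.inr ⟨(i, j), ⟨(b : ℕ) + 1, hblt⟩⟩, ⟨rfl, rfl⟩⟩, fun x => ?_⟩
      beta_reduce
      rw [cII_code D x (by omega), ← msgII_eq D x i j ⟨(b : ℕ) + 1, hblt⟩]
      show D.msgII x i j ((b : ℕ) + 1) + D.msgII x i j ((b : ℕ) + 1 + 1) +
          D.msgII x i j ((b : ℕ) + 1 + 1) = _
      rw [add_assoc, zmod2_add_self, add_zero, msgII_eq]
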